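/- Fix k ≥ 4 and let σ = (σ^{ij})_{1≤i,j≤k} be an admissible family. Suppose that σ^{12} = diag(1,1,1,0), that rk(Σ_{i,j} c_i d_j σ^{ij}) ≤ 3 for all c, d ∈ ℂ^k, and that the 4k × 4k block matrix σ has rank 6. Then every σ^{ij} has zero fourth row and zero fourth column (σ^{ij}_{l4} = σ^{ij}_{4p} = 0 for all i, j, l, p). Consequently, taking f* = (0,0,0,1)ᵀ ∈ ℂ⁴, one has σ · v = 0 for every b* ∈ ℂ^k, where v ∈ ℂ^{4k} is the column vector whose j-th block of size 4 is b*_j f*. -/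
import Mathlib


open Matrix

/-- A family `σ = (σ^{ij})` of complex `4×4` matrices is *admissible* if each `σ i j` is
symmetric and `σ i j = -σ j i`. -/
def Admissible (k : ℕ) (σ : Fin k → Fin k → Matrix (Fin 4) (Fin 4) ℂ) : Prop :=
  (∀ i j, (σ i j)ᵀ = σ i j) ∧ (∀ i j, σ i j = -σ j i)

/-- The `4k × 4k` block matrix whose `(i,j)` block is `σ i j`. -/
def blockMat (k : ℕ) (σ : Fin k → Fin k → Matrix (Fin 4) (Fin 4) ℂ) :
    Matrix (Fin k × Fin 4) (Fin k × Fin 4) ℂ :=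
  Matrix.of fun p q => σ p.1 q.1 p.2 q.2

/-- Let `k ≥ 4`, let `σ` be an admissible family with
`σ¹² = diag(1,1,1,0)`, `rk(Σ_{i,j} c_i d_j σ^{ij}) ≤ 3` for all `c, d ∈ ℂ^k`, and block
matrix of rank `6`.  Then every `σ^{ij}` has zero fourth row and zero fourth column, and
consequently, with `f* = (0,0,0,1)ᵀ`, one has `σ · v = 0` for every `b* ∈ ℂ^k`, where `v`
is the column whose `j`-th block of size 4 is `b*_j f*`. -/
theorem stmt5 (k : ℕ) (hk : 4 ≤ k) (σ : Fin k → Fin k → Matrix (Fin 4) (Fin 4) ℂ)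
    (hσ : Admissible k σ)
    (h12 : σ ⟨0, by omega⟩ ⟨1, by omega⟩ = Matrix.diagonal ![1, 1, 1, 0])
    (hrank3 : ∀ c d : Fin k → ℂ, (∑ i, ∑ j, (c i * d j) • σ i j).rank ≤ 3)
    (hrank : (blockMat k σ).rank = 6) :
    (∀ (i j : Fin k) (l p : Fin 4), σ i j l 3 = 0 ∧ σ i j 3 p = 0) ∧
      ∀ bst : Fin k → ℂ,
        (blockMat k σ).mulVec (fun q => bst q.1 * ![0, 0, 0, 1] q.2) = 0 := by
  set i₀ : Fin k := ⟨0, by omega⟩ with hi₀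
  set i₁ : Fin k := ⟨1, by omega⟩ with hi₁
  have hzero : ∀ i, σ i i = 0 := by
    intro i
    have h := hσ.2 i i
    have h2 : (2 : ℂ) • σ i i = 0 := by
      rw [two_smul]; nth_rewrite 2 [h]; simp
    simpa using (smul_eq_zero.mp h2).resolve_left (by norm_num)
  set e3 : Fin 3 → Fin 4 := fun b => ⟨b.1, by omega⟩ with he3
  set w : Fin 2 × Fin 3 → (Fin k × Fin 4 → ℂ) :=
    fun sb p => σ p.1 (![i₀, i₁] sb.1) p.2 (e3 sb.2) with hw
  have hσ10 : σ i₁ i₀ = -Matrix.diagonal ![1, 1, 1, 0] := by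
    rw [hσ.2 i₁ i₀, h12]
  -- linear independence of the six columns
  have hwind : LinearIndependent ℂ w := by
    set φ : ((Fin k × Fin 4) → ℂ) →ₗ[ℂ] ((Fin 2 × Fin 3) → ℂ) :=
      { toFun := fun x sb => ![-1, 1] sb.1 * x (![i₁, i₀] sb.1, e3 sb.2)
        map_add' := by intro x y; funext sb; simp [mul_add]
        map_smul' := by intro c x; funext sb; simp; ring } with hφ
    apply LinearIndependent.of_comp φ
    have hcomp : φ ∘ w = fun sb => Pi.single sb (1 : ℂ) := by
      funext ⟨s', b'⟩ ⟨s, b⟩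
      fin_cases s' <;> fin_cases s <;>
        fin_cases b <;> fin_cases b' <;>
        simp [hφ, hw, hzero, hσ10, h12, Matrix.diagonal_apply, Pi.single_apply,
          Prod.ext_iff, he3, Fin.ext_iff]
    have hbasis : (fun sb => Pi.single sb (1 : ℂ)) =
        ⇑(Pi.basisFun ℂ (Fin 2 × Fin 3)) := by
      funext sb; simp
    rw [hcomp, hbasis]
    exact (Pi.basisFun ℂ (Fin 2 × Fin 3)).linearIndependent
  -- the span of the six columns equals the column space
  have hle : Submodule.span ℂ (Set.range w) ≤
      LinearMap.range (blockMat k σ).mulVecLin := by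
    rw [Submodule.span_le]
    rintro _ ⟨⟨s, b⟩, rfl⟩
    exact ⟨Pi.single (![i₀, i₁] s, e3 b) 1, by
      funext p
      simp [Matrix.mulVecLin_apply, hw, blockMat]⟩
  have hspan : Submodule.span ℂ (Set.range w) =
      LinearMap.range (blockMat k σ).mulVecLin := by
    apply Submodule.eq_of_le_of_finrank_le hle
    have h1 : Module.finrank ℂ (Submodule.span ℂ (Set.range w)) = 6 := by
      rw [finrank_span_eq_card hwind]; simp
    rw [h1]
    exact le_of_eq hrank
  -- every column of the block matrix lies in the span
  have hcolmem : ∀ q : Fin k × Fin 4,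
      (fun p => blockMat k σ p q) ∈ Submodule.span ℂ (Set.range w) := by
    intro q
    rw [hspan]
    exact ⟨Pi.single q 1, by funext p; simp [Matrix.mulVecLin_apply]⟩
  -- key: if the (i,3)-functional kills the six columns, it kills everything
  have main : ∀ i : Fin k,
      (∀ (s : Fin 2) (b : Fin 3), σ i (![i₀, i₁] s) 3 (e3 b) = 0) →
      ∀ (j : Fin k) (b : Fin 4), σ i j 3 b = 0 := by
    intro i hi j b
    have hker : Submodule.span ℂ (Set.range w) ≤
        LinearMap.ker (LinearMap.proj (R := ℂ) (φ := fun _ : Fin k × Fin 4 => ℂ)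
          (i, (3 : Fin 4))) := by
      rw [Submodule.span_le]
      rintro _ ⟨⟨s, b'⟩, rfl⟩
      simpa [hw] using hi s b'
    have := hker (hcolmem (j, b))
    simpa [blockMat] using this
  have h0 : ∀ (j : Fin k) (b : Fin 4), σ i₀ j 3 b = 0 := by
    apply main
    intro s b
    fin_cases s
    · show σ i₀ i₀ 3 (e3 b) = 0
      simp [hzero]
    · show σ i₀ i₁ 3 (e3 b) = 0
      rw [h12, Matrix.diagonal_apply]
      have : (3 : Fin 4) ≠ e3 b := by fin_cases b <;> simp [he3, Fin.ext_iff] <;> decide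
      simp [this]
  have h1 : ∀ (j : Fin k) (b : Fin 4), σ i₁ j 3 b = 0 := by
    apply main
    intro s b
    fin_cases s
    · show σ i₁ i₀ 3 (e3 b) = 0
      rw [hσ10]
      have : (3 : Fin 4) ≠ e3 b := by fin_cases b <;> simp [he3, Fin.ext_iff] <;> decide
      simp [Matrix.diagonal_apply, this]
    · show σ i₁ i₁ 3 (e3 b) = 0
      simp [hzero]
  have hall : ∀ (i j : Fin k) (b : Fin 4), σ i j 3 b = 0 := by
    intro i
    apply main
    intro s b
    fin_cases s
    · show σ i i₀ 3 (e3 b) = 0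
      rw [hσ.2 i i₀]; simp [h0]
    · show σ i i₁ 3 (e3 b) = 0
      rw [hσ.2 i i₁]; simp [h1]
  have hall' : ∀ (i j : Fin k) (l : Fin 4), σ i j l 3 = 0 := by
    intro i j l
    have := congrFun (congrFun (hσ.1 i j) 3) l
    rw [Matrix.transpose_apply] at this
    rw [this, hall]
  refine ⟨fun i j l p => ⟨hall' i j l, hall i j p⟩, ?_⟩
  intro bst
  funext p
  show ∑ q : Fin k × Fin 4, blockMat k σ p q * (bst q.1 * ![0, 0, 0, 1] q.2) = 0
  apply Finset.sum_eq_zero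
  rintro ⟨j, b⟩ _
  fin_cases b <;> simp [blockMat, hall']
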